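/- Let q ≥ 1 be an integer, Λ ∈ ℂ ∖ {0}, and let f be holomorphic on a neighborhood U of 0 such that there is a constant C₀ with |f(z) − Λz(1 + z^q)| ≤ C₀|z|^{2q+1} for all z ∈ U. Define Ψ(z) = −Λ^q/(q z^q) for z ≠ 0. Then there exist δ > 0 and M > 0 such that for every z with 0 < |z| < δ one has f(z) ≠ 0 and |Ψ(f(z)) − (Λ^{-q} Ψ(z) + 1)| ≤ M/|Ψ(z)|. -/

import Mathlib

open Complex Set Metric Filter Topology

lemma binom_aux (q : ℕ) : ∀ w : ℂ, ‖w‖ ≤ 1 → ‖(1+w)^q - 1 - q*w‖ ≤ 3^q * ‖w‖^2 := by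
  induction q with
  | zero => intro w hw; simp
  | succ q ih =>
    intro w hw
    have key : (1+w)^(q+1) - 1 - ((q:ℂ)+1)*w
        = ((1+w)^q - 1 - (q:ℂ)*w)*(1+w) + (q:ℂ) * w^2 := by ring
    have h1 : ‖(1+w)^(q+1) - 1 - ((q+1:ℕ):ℂ)*w‖
        ≤ ‖(1+w)^q - 1 - (q:ℂ)*w‖ * ‖1+w‖ + (q:ℝ) * ‖w‖^2 := by
      push_cast
      rw [key]
      calc ‖((1+w)^q - 1 - (q:ℂ)*w)*(1+w) + (q:ℂ) * w^2‖
          ≤ ‖((1+w)^q - 1 - (q:ℂ)*w)*(1+w)‖ + ‖(q:ℂ)*w^2‖ := norm_add_le _ _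
        _ = ‖(1+w)^q - 1 - (q:ℂ)*w‖ * ‖1+w‖ + (q:ℝ) * ‖w‖^2 := by
            simp [norm_mul, norm_pow]
    have h2 : ‖(1+w:ℂ)‖ ≤ 2 := by
      calc ‖(1+w:ℂ)‖ ≤ 1 + ‖w‖ := by simpa using norm_add_le (1:ℂ) w
        _ ≤ 2 := by linarith
    have h3 := ih w hw
    have hq3 : (q:ℝ) ≤ 3^q := by
      exact_mod_cast (show q < 3^q from Nat.lt_pow_self (by norm_num)).le
    have hwn : 0 ≤ ‖w‖^2 := sq_nonneg _
    calc ‖(1+w)^(q+1) - 1 - ((q+1:ℕ):ℂ)*w‖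
        ≤ ‖(1+w)^q - 1 - (q:ℂ)*w‖ * ‖1+w‖ + (q:ℝ) * ‖w‖^2 := h1
      _ ≤ (3^q * ‖w‖^2) * 2 + (3:ℝ)^q * ‖w‖^2 := by
          have := mul_le_mul h3 h2 (norm_nonneg _) (by positivity)
          nlinarith [this, mul_le_mul_of_nonneg_right hq3 hwn]
      _ ≤ 3^(q+1) * ‖w‖^2 := by ring_nf; nlinarith [pow_nonneg (by norm_num : (0:ℝ) ≤ 3) q]

set_option maxHeartbeats 1000000 in
/-- The branched change of coordinates `w = Ψ(z) = −Λ^q/(q z^q)` of Appendix A.2 converts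
the normal form `f(z) = Λz(1 + z^q) + O(z^{2q+1})` near the fixed point `0` into the
near-translation `w ↦ Λ^{−q} w + 1 + O(1/w)` near infinity. -/
theorem branched_coordinate_near_translation
    (q : ℕ) (hq : 1 ≤ q) (Λ : ℂ) (hΛ : Λ ≠ 0)
    (r : ℝ) (hr : 0 < r) (f : ℂ → ℂ) (C₀ : ℝ)
    (hol : DifferentiableOn ℂ f (ball (0:ℂ) r))
    (hbound : ∀ z ∈ ball (0:ℂ) r,
      ‖f z - Λ * z * (1 + z ^ q)‖ ≤ C₀ * ‖z‖ ^ (2 * q + 1))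
    (Ψ : ℂ → ℂ) (hΨ : ∀ z : ℂ, Ψ z = -(Λ ^ q) / ((q : ℂ) * z ^ q)) :
    ∃ δ : ℝ, 0 < δ ∧ δ ≤ r ∧ ∃ M : ℝ, 0 < M ∧
      ∀ z : ℂ, 0 < ‖z‖ → ‖z‖ < δ →
        f z ≠ 0 ∧ ‖Ψ (f z) - ((Λ ^ q)⁻¹ * Ψ z + 1)‖ ≤ M / ‖Ψ z‖ := by
  have hΛn : 0 < ‖Λ‖ := norm_pos_iff.mpr hΛ
  have hqR : (0:ℝ) < q := by exact_mod_cast hq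
  set c : ℝ := (|C₀| + 1) / ‖Λ‖ with hc_def
  have hc : 0 < c := by positivity
  set δ : ℝ := min r (min 1 (min 4⁻¹ (c+1)⁻¹)) with hδ_def
  set A : ℝ := (3:ℝ)^q with hA_def
  have hA : 0 < A := by positivity
  set K : ℝ := 4*A + q*c + A*q + 2*q^2 with hK_def
  have hK : 0 < K := by positivity
  set M : ℝ := K * 2^q * ‖Λ‖^q / q^2 + 1 with hM_def
  have hM : 0 < M := by positivity
  refine ⟨δ, ?_, min_le_left _ _, M, hM, ?_⟩
  · have h1 : (0:ℝ) < (c+1)⁻¹ := by positivity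
    simp only [hδ_def, lt_min_iff]
    refine ⟨hr, by norm_num, by norm_num, h1⟩
  intro z hz0 hzδ
  have hz : z ≠ 0 := norm_pos_iff.mp hz0
  have hzr : z ∈ ball (0:ℂ) r := by
    simp only [mem_ball, dist_zero_right]
    exact lt_of_lt_of_le hzδ (min_le_left _ _)
  set t : ℝ := ‖z‖^q with ht_def
  have ht : 0 < t := pow_pos hz0 q
  have hz1 : ‖z‖ ≤ 1 :=
    (lt_of_lt_of_le hzδ ((min_le_right _ _).trans (min_le_left _ _))).le
  have htz : t ≤ ‖z‖ := pow_le_of_le_one hz0.le hz1 (by omega)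
  have ht4 : t ≤ 4⁻¹ :=
    htz.trans (lt_of_lt_of_le hzδ ((min_le_right _ _).trans ((min_le_right _ _).trans (min_le_left _ _)))).le
  have htc' : t ≤ (c+1)⁻¹ :=
    htz.trans (lt_of_lt_of_le hzδ ((min_le_right _ _).trans ((min_le_right _ _).trans (min_le_right _ _)))).le
  have htc : c * t ≤ 1 := by
    have h1 : c * t ≤ c * (c+1)⁻¹ := mul_le_mul_of_nonneg_left htc' hc.le
    have h2 : c * (c+1)⁻¹ ≤ 1 := by
      rw [← div_eq_mul_inv, div_le_one (by positivity)]; linarith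
    linarith
  -- the error term
  set e : ℂ := f z / (Λ * z) - 1 - z^q with he_def
  have hfe : f z = Λ * z * (1 + z^q + e) := by
    rw [he_def]; field_simp; ring
  have hee : Λ * z * e = f z - Λ * z * (1 + z^q) := by
    rw [hfe]; ring
  have hzq_t : ‖(z:ℂ)^q‖ = t := by rw [norm_pow]
  have hE : ‖e‖ ≤ c * t^2 := by
    have h1 : ‖Λ * z * e‖ ≤ (|C₀|+1) * ‖z‖^(2*q+1) := by
      rw [hee]
      refine (hbound z hzr).trans ?_
      have : (0:ℝ) ≤ ‖z‖^(2*q+1) := by positivity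
      nlinarith [abs_nonneg C₀, le_abs_self C₀]
    have h2 : ‖z‖^(2*q+1) = t^2 * ‖z‖ := by
      rw [pow_succ, two_mul, pow_add, ht_def]; ring
    rw [norm_mul, norm_mul, h2] at h1
    have hcΛ : c * ‖Λ‖ = |C₀| + 1 := div_mul_cancel₀ _ hΛn.ne'
    have h3 : ‖e‖ * (‖Λ‖ * ‖z‖) ≤ (c * t^2) * (‖Λ‖ * ‖z‖) := by
      have hcr : (c * t^2) * (‖Λ‖ * ‖z‖) = (c*‖Λ‖) * (t^2 * ‖z‖) := by ring
      rw [hcr, hcΛ]; linarith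
    exact le_of_mul_le_mul_right h3 (by positivity : (0:ℝ) < ‖Λ‖ * ‖z‖)
  set w : ℂ := z^q + e with hw_def
  have hwt : ‖w‖ ≤ 2*t := by
    have h1 : ‖w‖ ≤ ‖(z:ℂ)^q‖ + ‖e‖ := norm_add_le _ _
    have h2 : c * t^2 ≤ t := by nlinarith
    rw [hzq_t] at h1; linarith
  have hw1 : ‖w‖ ≤ 2⁻¹ := by linarith
  set v : ℂ := 1 + w with hv_def
  have hv2 : 2⁻¹ ≤ ‖v‖ := by
    have h1 : ‖(1:ℂ)‖ ≤ ‖v‖ + ‖w‖ := by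
      calc ‖(1:ℂ)‖ = ‖v - w‖ := by rw [hv_def]; ring_nf
        _ ≤ ‖v‖ + ‖w‖ := norm_sub_le _ _
    simp only [norm_one] at h1; linarith
  have hv : v ≠ 0 := by
    intro h; rw [h, norm_zero] at hv2; norm_num at hv2
  have hfz : f z = Λ * z * v := by rw [hfe, hv_def, hw_def]; ring
  have hfne : f z ≠ 0 := by
    rw [hfz]; exact mul_ne_zero (mul_ne_zero hΛ hz) hv
  refine ⟨hfne, ?_⟩
  have hq0 : (q:ℂ) ≠ 0 := Nat.cast_ne_zero.mpr (by omega)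
  have hvq : v^q ≠ 0 := pow_ne_zero _ hv
  have hzqne : (z:ℂ)^q ≠ 0 := pow_ne_zero _ hz
  have hΛq : Λ^q ≠ 0 := pow_ne_zero _ hΛ
  have hΨf : Ψ (f z) = -1 / ((q:ℂ) * z^q * v^q) := by
    rw [hΨ, hfz, mul_pow, mul_pow]
    rw [div_eq_div_iff (by exact mul_ne_zero hq0 (mul_ne_zero (mul_ne_zero hΛq hzqne) hvq))
      (by exact mul_ne_zero (mul_ne_zero hq0 hzqne) hvq)]
    ring
  have hΨz2 : (Λ^q)⁻¹ * Ψ z = -1/((q:ℂ)*z^q) := by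
    rw [hΨ]
    field_simp
  have hident : Ψ (f z) - ((Λ^q)⁻¹ * Ψ z + 1)
      = (v^q - 1 - (q:ℂ)*z^q*v^q) / ((q:ℂ) * z^q * v^q) := by
    rw [hΨf, hΨz2]
    field_simp
    ring
  have hD : ‖v^q - 1 - (q:ℂ)*w‖ ≤ A * ‖w‖^2 := by
    rw [hv_def, hA_def]; exact binom_aux q w (by linarith)
  have h1v : ‖1 - v^q‖ ≤ A*‖w‖^2 + q*‖w‖ := by
    have h : (1:ℂ) - v^q = -((v^q - 1 - (q:ℂ)*w) + (q:ℂ)*w) := by ring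
    rw [h, norm_neg]
    refine (norm_add_le _ _).trans ?_
    have : ‖(q:ℂ)*w‖ = q * ‖w‖ := by
      rw [norm_mul, Complex.norm_natCast]
    rw [this]; exact add_le_add hD le_rfl
  have hNid : v^q - 1 - (q:ℂ)*z^q*v^q
      = (v^q - 1 - (q:ℂ)*w) + (q:ℂ)*e + (q:ℂ)*z^q*(1 - v^q) := by
    rw [hw_def]; ring
  have hN : ‖v^q - 1 - (q:ℂ)*z^q*v^q‖ ≤ K * t^2 := by
    rw [hNid]
    have h1 : ‖(v^q - 1 - (q:ℂ)*w) + (q:ℂ)*e + (q:ℂ)*z^q*(1 - v^q)‖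
        ≤ ‖v^q - 1 - (q:ℂ)*w‖ + ‖(q:ℂ)*e‖ + ‖(q:ℂ)*z^q*(1 - v^q)‖ :=
      (norm_add_le _ _).trans (add_le_add (norm_add_le _ _) le_rfl)
    have h2 : ‖(q:ℂ)*e‖ ≤ q * (c*t^2) := by
      rw [norm_mul, Complex.norm_natCast]
      exact mul_le_mul_of_nonneg_left hE (by positivity)
    have h3 : ‖(q:ℂ)*z^q*(1 - v^q)‖ ≤ (q*t) * (A*‖w‖^2 + q*‖w‖) := by
      rw [norm_mul, norm_mul, Complex.norm_natCast, hzq_t]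
      exact mul_le_mul_of_nonneg_left h1v (by positivity)
    have hw0 : 0 ≤ ‖w‖ := norm_nonneg _
    have h4 : ‖w‖^2 ≤ (2*t)^2 := pow_le_pow_left₀ hw0 hwt 2
    have h5 : A*‖w‖^2 + q*‖w‖ ≤ A*(2*t)^2 + q*(2*t) := by
      have := mul_le_mul_of_nonneg_left h4 hA.le
      have := mul_le_mul_of_nonneg_left hwt hqR.le
      linarith
    have h6 : ‖(q:ℂ)*z^q*(1 - v^q)‖ ≤ (q*t) * (A*(2*t)^2 + q*(2*t)) :=
      h3.trans (mul_le_mul_of_nonneg_left h5 (by positivity))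
    have h7 : ‖v^q - 1 - (q:ℂ)*w‖ ≤ A*(2*t)^2 := hD.trans (mul_le_mul_of_nonneg_left h4 hA.le)
    have h9 : 4*A*(q:ℝ)*t*t^2 ≤ A*(q:ℝ)*t^2 := by
      have h10 : (4*t) * (A*(q:ℝ)*t^2) ≤ 1 * (A*(q:ℝ)*t^2) :=
        mul_le_mul_of_nonneg_right (by linarith) (by positivity)
      have e1 : 4*A*(q:ℝ)*t*t^2 = (4*t)*(A*(q:ℝ)*t^2) := by ring
      rw [e1]; linarith
    have e3 : A*(2*t)^2 = 4*(A*t^2) := by ring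
    have e4 : ((q:ℝ)*t)*(A*(2*t)^2 + (q:ℝ)*(2*t)) = 4*A*(q:ℝ)*t*t^2 + 2*((q:ℝ)^2*t^2) := by ring
    have e5 : (4*A + (q:ℝ)*c + A*(q:ℝ) + 2*(q:ℝ)^2) * t^2
        = 4*(A*t^2) + (q:ℝ)*(c*t^2) + A*(q:ℝ)*t^2 + 2*((q:ℝ)^2*t^2) := by ring
    rw [hK_def, e5]
    linarith [h1, h2, h6, h7, h9, e3, e4]
  have hden : (q:ℝ) * t * (2⁻¹)^q ≤ ‖(q:ℂ) * z^q * v^q‖ := by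
    rw [norm_mul, norm_mul, Complex.norm_natCast, hzq_t, norm_pow]
    gcongr
  have hΨz : ‖Ψ z‖ = ‖Λ‖^q / ((q:ℝ) * t) := by
    rw [hΨ, norm_div, norm_neg, norm_pow, norm_mul, Complex.norm_natCast, norm_pow]
  rw [hident, hΨz, norm_div]
  have hdpos : (0:ℝ) < (q:ℝ) * t * (2⁻¹)^q := by positivity
  have step1 : ‖v^q - 1 - (q:ℂ)*z^q*v^q‖ / ‖(q:ℂ) * z^q * v^q‖
      ≤ (K * t^2) / ((q:ℝ) * t * (2⁻¹)^q) :=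
    div_le_div₀ (by positivity) hN hdpos hden
  have step2 : (K * t^2) / ((q:ℝ) * t * (2⁻¹)^q) = K * 2^q * t / q := by
    field_simp
    ring_nf
    rw [← mul_pow]; norm_num
  have step4 : M / (‖Λ‖^q / ((q:ℝ)*t)) = M * ((q:ℝ)*t) / ‖Λ‖^q := by
    rw [div_div_eq_mul_div]
  rw [step4]
  rw [step2] at step1
  refine step1.trans ?_
  rw [div_le_div_iff₀ hqR (by positivity)]
  have hMq : M * q^2 = K * 2^q * ‖Λ‖^q + q^2 := by
    rw [hM_def]; field_simp
  nlinarith [mul_pos (mul_pos hK (pow_pos (by norm_num : (0:ℝ)<2) q)) ht,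
    pow_pos hΛn q, mul_pos hqR ht, sq_nonneg ((q:ℝ)), mul_pos hqR hqR]
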